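/- Let n ≥ 1 and k ≥ 1 be integers and fix i with 1 ≤ i ≤ n. Then, as an identity in ℚ(q)[x₁,…,xₙ], R_i(RS_{k−1,n}) = RS_{k,n}, where R_i = Σ_{l=0}^{n} e_{l+1} · (q−1)^l · (d/dx_i)_q^l and e_j denotes the j-th elementary symmetric polynomial in the n+1 quantities 1, x₁, …, xₙ. -/

import Mathlib

noncomputable section
open MvPolynomial

/-- `(q;q)_d = ∏_{k=1}^d (1 - q^k)` in `ℚ(q)`. -/
def qqPoch (q : RatFunc ℚ) (d : ℕ) : RatFunc ℚ :=
  ∏ k ∈ Finset.range d, (1 - q ^ (k + 1))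

/-- The `q`-multinomial coefficient `[Σk; k₀,…]_q` in `ℚ(q)`. -/
def qMultinomial {m : ℕ} (q : RatFunc ℚ) (k : Fin m → ℕ) : RatFunc ℚ :=
  qqPoch q (∑ i, k i) / ∏ i, qqPoch q (k i)

/-- The multivariate Rogers–Szegő polynomial
`RS_{k,n}(x;q) = Σ_{i₀+⋯+iₙ=k} [k; i₀,…,iₙ]_q x₁^{i₁}⋯xₙ^{iₙ}` in `ℚ(q)[x₁,…,xₙ]`. -/
def RSkn (n k : ℕ) : MvPolynomial (Fin n) (RatFunc ℚ) :=
  ∑ i ∈ Finset.Nat.antidiagonalTuple (n + 1) k,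
    monomial (Finsupp.equivFunOnFinite.symm fun j : Fin n => i j.succ)
      (qMultinomial RatFunc.X i)

/-- The substitution operator `T_{i,q} : f(x₁,…,x_i,…,xₙ) ↦ f(x₁,…,q·x_i,…,xₙ)`. -/
def Tq {n : ℕ} (i : Fin n) (f : MvPolynomial (Fin n) (RatFunc ℚ)) :
    MvPolynomial (Fin n) (RatFunc ℚ) :=
  aeval (fun j : Fin n => if j = i then C RatFunc.X * X j else X j) f

/-- The `i`-th Jackson (partial `q`-)derivative `(d/dx_i)_q f = (f − T_{i,q} f)/((1−q)x_i)`;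
the numerator `f − T_{i,q} f` is exactly divisible by the monomial `x_i`. -/
def jackson {n : ℕ} (i : Fin n) (f : MvPolynomial (Fin n) (RatFunc ℚ)) :
    MvPolynomial (Fin n) (RatFunc ℚ) :=
  C (1 - RatFunc.X : RatFunc ℚ)⁻¹ * ((f - Tq i f).divMonomial (Finsupp.single i 1))

/-- The `j`-th elementary symmetric polynomial `e_j(1, x₁, …, xₙ)` in the `n+1`
quantities `1, x₁, …, xₙ`. -/
def esymAug (n : ℕ) (j : ℕ) : MvPolynomial (Fin n) (RatFunc ℚ) :=
  ∑ t ∈ Finset.univ.powersetCard j,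
    ∏ m ∈ t, (Fin.cons 1 (fun j : Fin n => X j) : Fin (n + 1) → MvPolynomial (Fin n) (RatFunc ℚ)) m

/-- The raising operator `R_i = Σ_{l=0}^{n} e_{l+1}(1,x₁,…,xₙ) (q−1)^l (d/dx_i)_q^l`. -/
def Rop {n : ℕ} (i : Fin n) (f : MvPolynomial (Fin n) (RatFunc ℚ)) :
    MvPolynomial (Fin n) (RatFunc ℚ) :=
  ∑ l ∈ Finset.range (n + 1),
    esymAug n (l + 1) * (C ((RatFunc.X - 1 : RatFunc ℚ) ^ l) * (jackson i)^[l] f)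

end


noncomputable section
open MvPolynomial Finset

abbrev K := RatFunc ℚ
abbrev q : K := RatFunc.X

lemma one_sub_q_pow_ne_zero {m : ℕ} (hm : 1 ≤ m) : (1 : K) - q ^ m ≠ 0 := by
  intro h
  have h2 : (q : K) ^ m = 1 := by linear_combination -h
  have : (Polynomial.X : Polynomial ℚ) ^ m = 1 := by
    apply RatFunc.algebraMap_injective ℚ
    simpa [map_pow, RatFunc.algebraMap_X] using h2
  have := congrArg Polynomial.natDegree this
  simp [Polynomial.natDegree_X_pow] at this
  omega

lemma qqPoch_ne_zero (d : ℕ) : qqPoch q d ≠ 0 :=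
  Finset.prod_ne_zero_iff.2 fun k _ => one_sub_q_pow_ne_zero (by omega)

lemma qqPoch_succ (d : ℕ) : qqPoch q (d + 1) = qqPoch q d * (1 - q ^ (d + 1)) :=
  Finset.prod_range_succ _ d

end
noncomputable section
open MvPolynomial Finset

lemma coeff_RSkn (n k : ℕ) (d : Fin n →₀ ℕ) :
    coeff d (RSkn n k) =
      if (∑ j, d j) ≤ k then qMultinomial q (Fin.cons (k - ∑ j, d j) d) else 0 := by
  classical
  rw [RSkn, coeff_sum]
  simp only [coeff_monomial]
  have hcoe : ∀ t : Fin (n+1) → ℕ,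
      (Finsupp.equivFunOnFinite.symm fun j : Fin n => t j.succ) = d ↔
        (fun j : Fin n => t j.succ) = ⇑d := by
    intro t
    rw [Equiv.symm_apply_eq]
    rfl
  by_cases h : (∑ j, d j) ≤ k
  · rw [if_pos h]
    rw [Finset.sum_eq_single_of_mem (Fin.cons (k - ∑ j, d j) ⇑d : Fin (n+1) → ℕ) ?_ ?_]
    · rw [if_pos]
      rw [hcoe]
      funext j; simp
    · rw [Finset.Nat.mem_antidiagonalTuple, Fin.sum_cons]
      have : univ.sum ⇑d = ∑ j, d j := rfl
      omega
    · intro t ht hne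
      rw [if_neg]
      intro hc
      rw [hcoe] at hc
      apply hne
      rw [Finset.Nat.mem_antidiagonalTuple] at ht
      have h0 : t 0 = k - ∑ j, d j := by
        rw [Fin.sum_univ_succ] at ht
        have : ∑ j : Fin n, t j.succ = ∑ j, d j := by
          rw [hc]
        omega
      funext j
      refine Fin.cases ?_ ?_ j
      · simpa using h0
      · intro j'; simp [congrFun hc j']
  · rw [if_neg h]
    apply Finset.sum_eq_zero
    intro t ht
    rw [if_neg]
    intro hc
    rw [hcoe] at hc
    rw [Finset.Nat.mem_antidiagonalTuple, Fin.sum_univ_succ] at ht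
    rw [hc] at ht
    have : univ.sum ⇑d = ∑ j, d j := rfl
    omega

end
noncomputable section
open MvPolynomial Finset

lemma Tq_monomial {n : ℕ} (i : Fin n) (u : Fin n →₀ ℕ) (c : K) :
    Tq i (monomial u c) = monomial u (q ^ (u i) * c) := by
  classical
  rw [Tq, aeval_monomial]
  have key : (u.prod fun j e => (if j = i then C q * X j else X j : MvPolynomial (Fin n) K) ^ e)
      = C (q ^ u i) * (u.prod fun j e => (X j : MvPolynomial (Fin n) K) ^ e) := by
    by_cases hi : i ∈ u.support
    · rw [Finsupp.prod, Finsupp.prod,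
        Finset.prod_eq_mul_prod_sdiff_singleton_of_mem hi, Finset.prod_eq_mul_prod_sdiff_singleton_of_mem hi,
        if_pos rfl, mul_pow, ← C_pow,
        Finset.prod_congr rfl (fun j hj => by
          rw [if_neg (by simpa using (Finset.mem_sdiff.1 hj).2)] )]
      ring
    · have h0 : u i = 0 := Finsupp.notMem_support_iff.1 hi
      rw [h0, pow_zero, C_1, one_mul]
      apply Finsupp.prod_congr
      intro j hj
      rw [if_neg]
      rintro rfl; exact hi hj
  rw [key, monomial_eq, algebraMap_eq, map_mul]
  ring

lemma coeff_Tq {n : ℕ} (i : Fin n) (f : MvPolynomial (Fin n) K) (u : Fin n →₀ ℕ) :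
    coeff u (Tq i f) = q ^ (u i) * coeff u f := by
  classical
  conv_lhs => rw [f.as_sum]
  rw [show Tq i (∑ v ∈ f.support, monomial v (coeff v f))
        = ∑ v ∈ f.support, Tq i (monomial v (coeff v f)) from map_sum (aeval _) _ _]
  simp only [Tq_monomial, coeff_sum, coeff_monomial]
  rw [Finset.sum_ite_eq' f.support u fun v => q ^ (v i) * coeff v f]
  by_cases hu : u ∈ f.support
  · rw [if_pos hu]
  · rw [if_neg hu, MvPolynomial.notMem_support_iff.1 hu, mul_zero]

lemma coeff_jackson {n : ℕ} (i : Fin n) (f : MvPolynomial (Fin n) K) (u : Fin n →₀ ℕ) :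
    coeff u (jackson i f) =
      (1 - q)⁻¹ * ((1 - q ^ (u i + 1)) * coeff (u + Finsupp.single i 1) f) := by
  classical
  rw [jackson, coeff_C_mul, coeff_divMonomial, coeff_sub, coeff_Tq]
  have h1 : Finsupp.single i 1 + u = u + Finsupp.single i 1 := add_comm _ _
  have h2 : ((Finsupp.single i 1 + u : Fin n →₀ ℕ)) i = u i + 1 := by
    simp [Finsupp.add_apply, Finsupp.single_eq_same]
    omega
  rw [h2, h1]
  ring

end
noncomputable section
open MvPolynomial Finset

lemma sum_add_single {n : ℕ} (u : Fin n →₀ ℕ) (i : Fin n) :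
    ∑ j, (u + Finsupp.single i 1 : Fin n →₀ ℕ) j = (∑ j, u j) + 1 := by
  simp only [Finsupp.add_apply, Finset.sum_add_distrib]
  congr 1
  simp [Finsupp.single_apply]

lemma prod_qqPoch_add_single {n : ℕ} (u : Fin n →₀ ℕ) (i : Fin n) :
    ∏ j, qqPoch q ((u + Finsupp.single i 1 : Fin n →₀ ℕ) j)
      = (1 - q ^ (u i + 1)) * ∏ j, qqPoch q (u j) := by
  rw [Finset.prod_eq_mul_prod_sdiff_singleton_of_mem (Finset.mem_univ i),
    Finset.prod_eq_mul_prod_sdiff_singleton_of_mem (Finset.mem_univ i)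
      (fun j => qqPoch q (u j))]
  have h1 : (u + Finsupp.single i 1 : Fin n →₀ ℕ) i = u i + 1 := by
    simp
  have h2 : ∀ j ∈ Finset.univ \ {i}, qqPoch q ((u + Finsupp.single i 1 : Fin n →₀ ℕ) j)
      = qqPoch q (u j) := by
    intro j hj
    have hne : i ≠ j := by
      have : j ≠ i := by simpa using (Finset.mem_sdiff.1 hj).2
      exact this.symm
    simp [Finsupp.single_apply, hne]
  rw [h1, qqPoch_succ, Finset.prod_congr rfl h2]
  ring

lemma jackson_RS (n m : ℕ) (i : Fin n) :
    jackson i (RSkn n m) = C ((1 - q ^ m) * (1 - q)⁻¹) * RSkn n (m - 1) := by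
  apply MvPolynomial.ext
  intro u
  rw [coeff_jackson, coeff_C_mul, coeff_RSkn, coeff_RSkn, sum_add_single]
  rcases Nat.eq_zero_or_pos m with hm | hm
  · subst hm
    simp
  set w : Fin n →₀ ℕ := u + Finsupp.single i 1 with hw
  set s := ∑ j, u j with hs
  by_cases hsm : s + 1 ≤ m
  · rw [if_pos hsm, if_pos (by omega)]
    unfold qMultinomial
    have e1 : ∑ j : Fin (n+1), Fin.cons (m - (s + 1)) ⇑w j = m := by
      rw [Fin.sum_cons]
      have : ∑ j : Fin n, w j = s + 1 := sum_add_single u i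
      omega
    have e2 : ∑ j : Fin (n+1), Fin.cons (m - 1 - s) ⇑u j = m - 1 := by
      rw [Fin.sum_cons]
      have : ∑ j : Fin n, u j = s := rfl
      omega
    have e3 : ∏ j : Fin (n+1), qqPoch q ((Fin.cons (m - (s+1)) ⇑w : Fin (n+1) → ℕ) j)
        = qqPoch q (m - 1 - s) * ((1 - q ^ (u i + 1)) * ∏ j, qqPoch q (u j)) := by
      rw [Fin.prod_univ_succ]
      simp only [Fin.cons_zero, Fin.cons_succ]
      rw [show m - (s+1) = m - 1 - s by omega, hw, prod_qqPoch_add_single]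
    have e4 : ∏ j : Fin (n+1), qqPoch q ((Fin.cons (m - 1 - s) ⇑u : Fin (n+1) → ℕ) j)
        = qqPoch q (m - 1 - s) * ∏ j, qqPoch q (u j) := by
      rw [Fin.prod_univ_succ]
      simp only [Fin.cons_zero, Fin.cons_succ]
    rw [e1, e2, e3, e4]
    have hqm : qqPoch q m = qqPoch q (m - 1) * (1 - q ^ m) := by
      conv_lhs => rw [show m = (m - 1) + 1 by omega]
      rw [qqPoch_succ, show m - 1 + 1 = m by omega]
    rw [hqm]
    have hy : (1 : K) - q ^ (u i + 1) ≠ 0 := one_sub_q_pow_ne_zero (by omega)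
    have hB : qqPoch q (m - 1 - s) ≠ 0 := qqPoch_ne_zero _
    have hP : (∏ j, qqPoch q (u j)) ≠ 0 :=
      Finset.prod_ne_zero_iff.2 fun j _ => qqPoch_ne_zero _
    have hq1 : (1 : K) - q ≠ 0 := by
      have := one_sub_q_pow_ne_zero (m := 1) le_rfl
      simpa using this
    field_simp
  · rw [if_neg hsm, if_neg (by omega)]
    ring

lemma jackson_C_mul {n : ℕ} (i : Fin n) (c : K) (f : MvPolynomial (Fin n) K) :
    jackson i (C c * f) = C c * jackson i f := by
  apply MvPolynomial.ext
  intro u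
  rw [coeff_jackson, coeff_C_mul, coeff_C_mul, coeff_jackson]
  ring

lemma iter_jackson_RS (n : ℕ) (i : Fin n) (m l : ℕ) :
    (jackson i)^[l] (RSkn n m)
      = C (∏ j ∈ Finset.range l, ((1 - q ^ (m - j)) * (1 - q)⁻¹)) * RSkn n (m - l) := by
  induction l with
  | zero => simp
  | succ l ih =>
    rw [Function.iterate_succ_apply', ih, jackson_C_mul, jackson_RS,
      Finset.prod_range_succ, ← mul_assoc, ← C_mul, Nat.sub_sub]

end
noncomputable section
open MvPolynomial Finset

def ind {n : ℕ} (S : Finset (Fin n)) : Fin n →₀ ℕ := ∑ j ∈ S, Finsupp.single j 1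

lemma ind_apply {n : ℕ} (S : Finset (Fin n)) (j : Fin n) :
    ind S j = if j ∈ S then 1 else 0 := by
  classical
  rw [ind, Finset.sum_apply']
  rw [Finset.sum_congr rfl (fun j' _ => Finsupp.single_apply)]
  exact Finset.sum_ite_eq' S j (fun _ => 1)

lemma prod_X_eq {n : ℕ} (S : Finset (Fin n)) :
    ∏ j ∈ S, (X j : MvPolynomial (Fin n) K) = monomial (ind S) 1 := by
  classical
  induction S using Finset.cons_induction with
  | empty => simp [ind]
  | cons a S ha ih =>
    rw [Finset.prod_cons, ih]
    have h : ind (Finset.cons a S ha) = Finsupp.single a 1 + ind S := by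
      rw [ind, ind, Finset.sum_cons]
    rw [h, X, monomial_mul, mul_one]

lemma esymAug_succ (n j : ℕ) :
    esymAug n (j + 1)
      = (∑ S ∈ (Finset.univ : Finset (Fin n)).powersetCard (j + 1), monomial (ind S) (1 : K))
        + ∑ S ∈ (Finset.univ : Finset (Fin n)).powersetCard j, monomial (ind S) (1 : K) := by
  classical
  rw [esymAug, Fin.univ_succ, Finset.cons_eq_insert,
    Finset.powersetCard_succ_insert (by simp)]
  have hdisj : Disjoint
      ((Finset.univ.map ⟨Fin.succ, Fin.succ_injective n⟩).powersetCard (j + 1))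
      (((Finset.univ.map ⟨Fin.succ, Fin.succ_injective n⟩).powersetCard j).image (insert 0)) := by
    rw [Finset.disjoint_right]
    intro t htI htP
    rw [Finset.mem_image] at htI
    obtain ⟨t', ht', rfl⟩ := htI
    have h0 : (0 : Fin (n+1)) ∉ Finset.univ.map ⟨Fin.succ, Fin.succ_injective n⟩ := by simp
    exact h0 ((Finset.mem_powersetCard.1 htP).1 (Finset.mem_insert_self 0 t'))
  rw [Finset.sum_union hdisj]
  have hrw : ∀ S : Finset (Fin n),
      (Finset.mapEmbedding (⟨Fin.succ, Fin.succ_injective n⟩ : Fin n ↪ Fin (n+1))).toEmbedding S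
        = S.map ⟨Fin.succ, Fin.succ_injective n⟩ := fun _ => rfl
  congr 1
  · rw [Finset.powersetCard_map, Finset.sum_map]
    apply Finset.sum_congr rfl
    intro S _
    rw [hrw, Finset.prod_map, ← prod_X_eq]
    apply Finset.prod_congr rfl
    intro x _
    exact Fin.cons_succ (α := fun _ : Fin (n+1) => MvPolynomial (Fin n) K) 1 _ x
  · have hinj : ∀ x ∈ (Finset.univ.map ⟨Fin.succ, Fin.succ_injective n⟩).powersetCard j,
        ∀ y ∈ (Finset.univ.map ⟨Fin.succ, Fin.succ_injective n⟩).powersetCard j,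
        insert (0 : Fin (n+1)) x = insert 0 y → x = y := by
      intro x hx y hy hxy
      have h0 : (0 : Fin (n+1)) ∉ Finset.univ.map ⟨Fin.succ, Fin.succ_injective n⟩ := by simp
      have h0x : (0 : Fin (n+1)) ∉ x := fun h => h0 ((Finset.mem_powersetCard.1 hx).1 h)
      have h0y : (0 : Fin (n+1)) ∉ y := fun h => h0 ((Finset.mem_powersetCard.1 hy).1 h)
      rw [← Finset.erase_insert h0x, ← Finset.erase_insert h0y, hxy]
    rw [Finset.sum_image hinj, Finset.powersetCard_map, Finset.sum_map]
    apply Finset.sum_congr rfl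
    intro S _
    have h0m : (0 : Fin (n+1)) ∉
        (Finset.mapEmbedding (⟨Fin.succ, Fin.succ_injective n⟩ : Fin n ↪ Fin (n+1))).toEmbedding S := by
      rw [hrw]
      simp [Fin.succ_ne_zero]
    rw [Finset.prod_insert h0m, Fin.cons_zero, one_mul, hrw,
      Finset.prod_map, ← prod_X_eq]
    apply Finset.prod_congr rfl
    intro x _
    exact Fin.cons_succ (α := fun _ : Fin (n+1) => MvPolynomial (Fin n) K) 1 _ x

end
noncomputable section
open MvPolynomial Finset

def clk (k l : ℕ) : K := ∏ j ∈ Finset.range l, (q ^ (k - 1 - j) - 1)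

lemma clk_eq_zero {k l : ℕ} (hk : 1 ≤ k) (h : k ≤ l) : clk k l = 0 :=
  Finset.prod_eq_zero (Finset.mem_range.2 (by omega : k - 1 < l))
    (by rw [Nat.sub_self, pow_zero, sub_self])

lemma clk_mul_qqPoch {k l : ℕ} (hk : 1 ≤ k) (h : l ≤ k - 1) :
    clk k l * qqPoch q (k - 1 - l) = (-1) ^ l * qqPoch q (k - 1) := by
  induction l with
  | zero => simp [clk]
  | succ l ih =>
    have h' : l ≤ k - 1 := by omega
    rw [clk, Finset.prod_range_succ, ← clk]
    have e : k - 1 - l = (k - 1 - (l + 1)) + 1 := by omega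
    have hsplit : qqPoch q (k - 1 - l) = qqPoch q (k - 1 - (l + 1)) * (1 - q ^ (k - 1 - l)) := by
      conv_lhs => rw [e]
      rw [qqPoch_succ, ← e]
    have e2 : (q ^ (k - 1 - l) - 1) * qqPoch q (k - 1 - (l + 1)) = - qqPoch q (k - 1 - l) := by
      rw [hsplit]; ring
    calc clk k l * (q ^ (k - 1 - l) - 1) * qqPoch q (k - 1 - (l + 1))
        = clk k l * ((q ^ (k - 1 - l) - 1) * qqPoch q (k - 1 - (l + 1))) := by ring
      _ = -(clk k l * qqPoch q (k - 1 - l)) := by rw [e2]; ring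
      _ = -((-1) ^ l * qqPoch q (k - 1)) := by rw [ih h']
      _ = (-1) ^ (l + 1) * qqPoch q (k - 1) := by ring

lemma sum_ind {n : ℕ} (S : Finset (Fin n)) : ∑ j, ind S j = S.card := by
  classical
  rw [Finset.sum_congr rfl fun j _ => ind_apply S j]
  rw [Finset.sum_ite_mem]
  simp

lemma ind_le_iff {n : ℕ} (S : Finset (Fin n)) (d : Fin n →₀ ℕ) :
    ind S ≤ d ↔ ∀ j ∈ S, 1 ≤ d j := by
  rw [Finsupp.le_def]
  constructor
  · intro h j hj
    have := h j
    rwa [ind_apply, if_pos hj] at this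
  · intro h j
    rw [ind_apply]
    by_cases hj : j ∈ S
    · rw [if_pos hj]; exact h j hj
    · rw [if_neg hj]; omega

lemma sum_sub_ind {n : ℕ} (S : Finset (Fin n)) (d : Fin n →₀ ℕ) (h : ind S ≤ d) :
    ∑ j, (d - ind S : Fin n →₀ ℕ) j = (∑ j, d j) - S.card ∧ S.card ≤ ∑ j, d j := by
  classical
  have happ : ∀ j, (d - ind S : Fin n →₀ ℕ) j = d j - ind S j := fun j => Finsupp.tsub_apply d (ind S) j
  have hle : ∀ j, ind S j ≤ d j := fun j => h j
  constructor
  · rw [Finset.sum_congr rfl fun j _ => happ j,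
      Finset.sum_tsub_distrib Finset.univ (fun j _ => hle j), sum_ind]
  · calc S.card = ∑ j, ind S j := (sum_ind S).symm
      _ ≤ ∑ j, d j := Finset.sum_le_sum fun j _ => hle j

lemma prod_qqPoch_sub_ind {n : ℕ} (S : Finset (Fin n)) (d : Fin n →₀ ℕ) (h : ind S ≤ d) :
    (∏ j, qqPoch q ((d - ind S : Fin n →₀ ℕ) j)) * ∏ j ∈ S, (1 - q ^ d j)
      = ∏ j, qqPoch q (d j) := by
  classical
  rw [← Finset.prod_mul_prod_compl S (fun j => qqPoch q (d j)),
    ← Finset.prod_mul_prod_compl S (fun j => qqPoch q ((d - ind S : Fin n →₀ ℕ) j))]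
  have h1 : ∀ j ∈ Sᶜ, qqPoch q ((d - ind S : Fin n →₀ ℕ) j) = qqPoch q (d j) := by
    intro j hj
    rw [Finsupp.tsub_apply, ind_apply, if_neg (Finset.mem_compl.1 hj), Nat.sub_zero]
  have h2 : ∀ j ∈ S, qqPoch q ((d - ind S : Fin n →₀ ℕ) j) = qqPoch q (d j - 1) := by
    intro j hj
    rw [Finsupp.tsub_apply, ind_apply, if_pos hj]
  rw [Finset.prod_congr rfl h1, Finset.prod_congr rfl h2]
  have h3 : (∏ j ∈ S, qqPoch q (d j - 1)) * ∏ j ∈ S, (1 - q ^ d j)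
      = ∏ j ∈ S, qqPoch q (d j) := by
    rw [← Finset.prod_mul_distrib]
    apply Finset.prod_congr rfl
    intro j hj
    have hd : 1 ≤ d j := (ind_le_iff S d).1 h j hj
    conv_rhs => rw [show d j = (d j - 1) + 1 by omega, qqPoch_succ,
      show d j - 1 + 1 = d j by omega]
  calc (∏ j ∈ S, qqPoch q (d j - 1)) * (∏ j ∈ Sᶜ, qqPoch q (d j)) * ∏ j ∈ S, (1 - q ^ d j)
      = ((∏ j ∈ S, qqPoch q (d j - 1)) * ∏ j ∈ S, (1 - q ^ d j)) * ∏ j ∈ Sᶜ, qqPoch q (d j) := by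
        ring
    _ = _ := by rw [h3]

lemma alt_sum {n : ℕ} (d : Fin n →₀ ℕ) :
    ∑ S ∈ (Finset.univ : Finset (Fin n)).powerset,
        (-1 : K) ^ S.card * ∏ j ∈ S, (1 - q ^ d j) = q ^ (∑ j, d j) := by
  classical
  have h := Finset.prod_add (fun j => -(1 - q ^ d j)) (fun _ => (1 : K)) Finset.univ
  have h1 : ∏ j, (-(1 - q ^ d j) + 1) = q ^ (∑ j, d j) := by
    rw [← Finset.prod_pow_eq_pow_sum]
    apply Finset.prod_congr rfl
    intro j _
    ring
  rw [h1] at h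
  rw [h]
  apply Finset.sum_congr rfl
  intro S _
  rw [Finset.prod_const_one, mul_one]
  rw [show (∏ j ∈ S, -(1 - q ^ d j)) = ∏ j ∈ S, (-1 : K) * (1 - q ^ d j) by
    apply Finset.prod_congr rfl; intro j _; ring]
  rw [Finset.prod_mul_distrib, Finset.prod_const]

end
noncomputable section
open MvPolynomial Finset

lemma Rop_RS_eq (n k : ℕ) (i : Fin n) :
    Rop i (RSkn n (k - 1))
      = ∑ l ∈ Finset.range (n + 1), C (clk k l) * (esymAug n (l + 1) * RSkn n (k - 1 - l)) := by
  rw [Rop]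
  apply Finset.sum_congr rfl
  intro l _
  rw [iter_jackson_RS]
  have hq1 : (1 : K) - q ≠ 0 := by
    have := one_sub_q_pow_ne_zero (m := 1) le_rfl
    simpa using this
  have hc : (q - 1) ^ l * ∏ j ∈ Finset.range l, ((1 - q ^ (k - 1 - j)) * (1 - q)⁻¹)
      = clk k l := by
    have hpow : (q - 1 : K) ^ l = ∏ _j ∈ Finset.range l, (q - 1 : K) := by
      rw [Finset.prod_const, Finset.card_range]
    rw [clk, hpow, ← Finset.prod_mul_distrib]
    apply Finset.prod_congr rfl
    intro j _
    field_simp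
    ring
  rw [show (RatFunc.X - 1 : RatFunc ℚ) = q - 1 from rfl, ← hc, map_mul]
  ring

lemma reshape1 {M : Type*} [AddCommMonoid M] (n : ℕ) (f : Finset (Fin n) → M) :
    ∑ l ∈ Finset.range (n + 1), ∑ S ∈ (Finset.univ : Finset (Fin n)).powersetCard (l + 1), f S
      = ∑ S ∈ (Finset.univ : Finset (Fin n)).powerset, (if S = ∅ then 0 else f S) := by
  classical
  have hRHS : ∑ S ∈ (Finset.univ : Finset (Fin n)).powerset, (if S = ∅ then 0 else f S)
      = ∑ j ∈ Finset.range (n + 1),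
          ∑ S ∈ (Finset.univ : Finset (Fin n)).powersetCard j, (if S = ∅ then 0 else f S) := by
    rw [Finset.sum_powerset]
    simp
  have h0 : ∑ S ∈ (Finset.univ : Finset (Fin n)).powersetCard 0, (if S = ∅ then 0 else f S) = 0 := by
    simp
  have hlast : ∑ S ∈ (Finset.univ : Finset (Fin n)).powersetCard (n + 1), f S = 0 := by
    rw [Finset.powersetCard_eq_empty.2 (by simp), Finset.sum_empty]
  rw [hRHS]
  conv_lhs => rw [Finset.sum_range_succ]
  conv_rhs => rw [Finset.sum_range_succ' _ n]
  rw [hlast, add_zero, h0, add_zero]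
  apply Finset.sum_congr rfl
  intro l _
  apply Finset.sum_congr rfl
  intro S hS
  rw [if_neg]
  intro hemp
  have := (Finset.mem_powersetCard.1 hS).2
  rw [hemp] at this
  simp at this

lemma reshape2 {M : Type*} [AddCommMonoid M] (n : ℕ) (f : ℕ → Finset (Fin n) → M) :
    ∑ l ∈ Finset.range (n + 1), ∑ S ∈ (Finset.univ : Finset (Fin n)).powersetCard l, f l S
      = ∑ S ∈ (Finset.univ : Finset (Fin n)).powerset, f S.card S := by
  classical
  rw [Finset.sum_powerset]
  have : Fintype.card (Fin n) = n := Fintype.card_fin n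
  rw [Finset.card_univ, this]
  apply Finset.sum_congr rfl
  intro l _
  apply Finset.sum_congr rfl
  intro S hS
  rw [(Finset.mem_powersetCard.1 hS).2]

end
noncomputable section
open MvPolynomial Finset

lemma qMult_cons (n : ℕ) (a : ℕ) (e : Fin n →₀ ℕ) :
    qMultinomial q (Fin.cons a ⇑e) =
      qqPoch q (a + ∑ j, e j) / (qqPoch q a * ∏ j, qqPoch q (e j)) := by
  rw [qMultinomial, Fin.sum_cons, Fin.prod_univ_succ]
  simp only [Fin.cons_zero, Fin.cons_succ]

lemma not_ind_le {n : ℕ} {S : Finset (Fin n)} {d : Fin n →₀ ℕ} (h : ¬ ind S ≤ d) :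
    ∏ j ∈ S, (1 - q ^ d j) = 0 := by
  rw [ind_le_iff] at h
  push_neg at h
  obtain ⟨j, hj, hd⟩ := h
  apply Finset.prod_eq_zero hj
  rw [show d j = 0 by omega, pow_zero, sub_self]

lemma A_term (n k : ℕ) (hk : 1 ≤ k) (d : Fin n →₀ ℕ) (hs : ∑ j, d j ≤ k)
    (S : Finset (Fin n)) (hS : S ≠ ∅) :
    clk k (S.card - 1) * (if ind S ≤ d then coeff (d - ind S) (RSkn n (k - S.card)) else 0)
      = (-1) ^ (S.card - 1) * (∏ j ∈ S, (1 - q ^ d j))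
        * (qqPoch q (k - 1) / (qqPoch q (k - ∑ j, d j) * ∏ j, qqPoch q (d j))) := by
  classical
  set s := ∑ j, d j with hsdef
  by_cases hle : ind S ≤ d
  · have hcard1 : 1 ≤ S.card := Finset.card_pos.2 (Finset.nonempty_iff_ne_empty.2 hS)
    obtain ⟨hsum, hcards⟩ := sum_sub_ind S d hle
    have hcardk : S.card ≤ k := le_trans hcards hs
    rw [if_pos hle, coeff_RSkn, if_pos (by omega : (∑ j, (d - ind S : Fin n →₀ ℕ) j) ≤ k - S.card)]
    rw [show k - S.card - ∑ j, (d - ind S : Fin n →₀ ℕ) j = k - s by omega]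
    rw [qMult_cons, hsum]
    rw [show k - s + (s - S.card) = k - S.card by omega]
    have hY : (∏ j ∈ S, (1 - q ^ d j)) ≠ 0 := by
      rw [Finset.prod_ne_zero_iff]
      intro j hj
      exact one_sub_q_pow_ne_zero ((ind_le_iff S d).1 hle j hj)
    have hQP : (∏ j, qqPoch q ((d - ind S : Fin n →₀ ℕ) j)) * ∏ j ∈ S, (1 - q ^ d j)
        = ∏ j, qqPoch q (d j) := prod_qqPoch_sub_ind S d hle
    have hclk : clk k (S.card - 1) * qqPoch q (k - S.card) = (-1) ^ (S.card - 1) * qqPoch q (k - 1) := by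
      have := clk_mul_qqPoch (k := k) (l := S.card - 1) hk (by omega)
      rwa [show k - 1 - (S.card - 1) = k - S.card by omega] at this
    have hQ : (∏ j, qqPoch q ((d - ind S : Fin n →₀ ℕ) j)) ≠ 0 :=
      Finset.prod_ne_zero_iff.2 fun j _ => qqPoch_ne_zero _
    have hB : qqPoch q (k - s) ≠ 0 := qqPoch_ne_zero _
    rw [← hQP, mul_div_assoc', mul_div_assoc',
      div_eq_div_iff (by exact mul_ne_zero hB hQ) (by exact mul_ne_zero hB (mul_ne_zero hQ hY))]
    linear_combination (qqPoch q (k - s) * (∏ j, qqPoch q ((d - ind S : Fin n →₀ ℕ) j))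
      * ∏ j ∈ S, (1 - q ^ d j)) * hclk
  · rw [if_neg hle, not_ind_le hle, mul_zero]
    ring

end
noncomputable section
open MvPolynomial Finset

lemma B_term (n k : ℕ) (hk : 1 ≤ k) (d : Fin n →₀ ℕ) (hs : ∑ j, d j ≤ k - 1)
    (S : Finset (Fin n)) :
    clk k S.card * (if ind S ≤ d then coeff (d - ind S) (RSkn n (k - 1 - S.card)) else 0)
      = (-1) ^ S.card * (∏ j ∈ S, (1 - q ^ d j))
        * (qqPoch q (k - 1) / (qqPoch q (k - 1 - ∑ j, d j) * ∏ j, qqPoch q (d j))) := by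
  classical
  set s := ∑ j, d j with hsdef
  by_cases hle : ind S ≤ d
  · obtain ⟨hsum, hcards⟩ := sum_sub_ind S d hle
    have hcardk : S.card ≤ k - 1 := le_trans hcards hs
    rw [if_pos hle, coeff_RSkn,
      if_pos (by omega : (∑ j, (d - ind S : Fin n →₀ ℕ) j) ≤ k - 1 - S.card)]
    rw [show k - 1 - S.card - ∑ j, (d - ind S : Fin n →₀ ℕ) j = k - 1 - s by omega]
    rw [qMult_cons, hsum]
    rw [show k - 1 - s + (s - S.card) = k - 1 - S.card by omega]
    have hY : (∏ j ∈ S, (1 - q ^ d j)) ≠ 0 := by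
      rw [Finset.prod_ne_zero_iff]
      intro j hj
      exact one_sub_q_pow_ne_zero ((ind_le_iff S d).1 hle j hj)
    have hQP : (∏ j, qqPoch q ((d - ind S : Fin n →₀ ℕ) j)) * ∏ j ∈ S, (1 - q ^ d j)
        = ∏ j, qqPoch q (d j) := prod_qqPoch_sub_ind S d hle
    have hclk : clk k S.card * qqPoch q (k - 1 - S.card)
        = (-1) ^ S.card * qqPoch q (k - 1) :=
      clk_mul_qqPoch hk hcardk
    have hQ : (∏ j, qqPoch q ((d - ind S : Fin n →₀ ℕ) j)) ≠ 0 :=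
      Finset.prod_ne_zero_iff.2 fun j _ => qqPoch_ne_zero _
    have hB : qqPoch q (k - 1 - s) ≠ 0 := qqPoch_ne_zero _
    rw [← hQP, mul_div_assoc', mul_div_assoc',
      div_eq_div_iff (by exact mul_ne_zero hB hQ) (by exact mul_ne_zero hB (mul_ne_zero hQ hY))]
    linear_combination (qqPoch q (k - 1 - s) * (∏ j, qqPoch q ((d - ind S : Fin n →₀ ℕ) j))
      * ∏ j ∈ S, (1 - q ^ d j)) * hclk
  · rw [if_neg hle, not_ind_le hle, mul_zero]
    ring

lemma B_term0 (n k : ℕ) (hk : 1 ≤ k) (d : Fin n →₀ ℕ) (hs : ∑ j, d j = k)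
    (S : Finset (Fin n)) :
    clk k S.card * (if ind S ≤ d then coeff (d - ind S) (RSkn n (k - 1 - S.card)) else 0) = 0 := by
  classical
  by_cases hle : ind S ≤ d
  · obtain ⟨hsum, hcards⟩ := sum_sub_ind S d hle
    by_cases hck : S.card ≤ k - 1
    · rw [if_pos hle, coeff_RSkn, if_neg (by omega), mul_zero]
    · rw [clk_eq_zero hk (by omega), zero_mul]
  · rw [if_neg hle, mul_zero]

lemma A_term_zero (n k : ℕ) (hk : 1 ≤ k) (d : Fin n →₀ ℕ) (hs : k < ∑ j, d j)
    (S : Finset (Fin n)) (hS : S ≠ ∅) :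
    clk k (S.card - 1) * (if ind S ≤ d then coeff (d - ind S) (RSkn n (k - S.card)) else 0) = 0 := by
  classical
  by_cases hle : ind S ≤ d
  · obtain ⟨hsum, hcards⟩ := sum_sub_ind S d hle
    by_cases hck : S.card ≤ k
    · rw [if_pos hle, coeff_RSkn, if_neg (by omega), mul_zero]
    · rw [clk_eq_zero hk (by omega), zero_mul]
  · rw [if_neg hle, mul_zero]

lemma B_term_zero (n k : ℕ) (hk : 1 ≤ k) (d : Fin n →₀ ℕ) (hs : k < ∑ j, d j)
    (S : Finset (Fin n)) :
    clk k S.card * (if ind S ≤ d then coeff (d - ind S) (RSkn n (k - 1 - S.card)) else 0) = 0 := by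
  classical
  by_cases hle : ind S ≤ d
  · obtain ⟨hsum, hcards⟩ := sum_sub_ind S d hle
    by_cases hck : S.card ≤ k - 1
    · rw [if_pos hle, coeff_RSkn, if_neg (by omega), mul_zero]
    · rw [clk_eq_zero hk (by omega), zero_mul]
  · rw [if_neg hle, mul_zero]

end
noncomputable section
open MvPolynomial Finset

lemma coeff_esymAug_mul (n j : ℕ) (f : MvPolynomial (Fin n) K) (d : Fin n →₀ ℕ) :
    coeff d (esymAug n (j + 1) * f)
      = (∑ S ∈ (Finset.univ : Finset (Fin n)).powersetCard (j + 1),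
          if ind S ≤ d then coeff (d - ind S) f else 0)
        + ∑ S ∈ (Finset.univ : Finset (Fin n)).powersetCard j,
            if ind S ≤ d then coeff (d - ind S) f else 0 := by
  rw [esymAug_succ, add_mul, Finset.sum_mul, Finset.sum_mul, coeff_add, coeff_sum, coeff_sum]
  congr 1 <;>
  · apply Finset.sum_congr rfl
    intro S _
    rw [coeff_monomial_mul', one_mul]

lemma alt_sum_ne (n : ℕ) (d : Fin n →₀ ℕ) :
    ∑ S ∈ (Finset.univ : Finset (Fin n)).powerset,
        (if S = ∅ then 0 else (-1 : K) ^ (S.card - 1) * ∏ j ∈ S, (1 - q ^ d j))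
      = 1 - q ^ (∑ j, d j) := by
  classical
  have hterm : ∀ S ∈ (Finset.univ : Finset (Fin n)).powerset,
      (if S = ∅ then 0 else (-1 : K) ^ (S.card - 1) * ∏ j ∈ S, (1 - q ^ d j))
        = (if S = ∅ then (1 : K) else 0) - (-1 : K) ^ S.card * ∏ j ∈ S, (1 - q ^ d j) := by
    intro S _
    by_cases hS : S = ∅
    · subst hS; simp
    · rw [if_neg hS, if_neg hS]
      have hc : 1 ≤ S.card := Finset.card_pos.2 (Finset.nonempty_iff_ne_empty.2 hS)
      have hp : (-1 : K) ^ S.card = -(-1 : K) ^ (S.card - 1) := by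
        conv_lhs => rw [show S.card = (S.card - 1) + 1 by omega]
        rw [pow_succ]
        ring
      rw [hp]
      ring
  rw [Finset.sum_congr rfl hterm, Finset.sum_sub_distrib, alt_sum]
  congr 1
  rw [Finset.sum_ite_eq' _ (∅ : Finset (Fin n)) (fun _ => (1 : K))]
  simp

theorem stmt11' (n k : ℕ) (hn : 1 ≤ n) (hk : 1 ≤ k) (i : Fin n) :
    Rop i (RSkn n (k - 1)) = RSkn n k := by
  classical
  rw [Rop_RS_eq]
  apply MvPolynomial.ext
  intro d
  rw [coeff_sum]
  set s := ∑ j, d j with hsdef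
  set P := ∏ j, qqPoch q (d j) with hPdef
  have hP : P ≠ 0 := Finset.prod_ne_zero_iff.2 fun j _ => qqPoch_ne_zero _
  have hL : ∀ l ∈ Finset.range (n + 1),
      coeff d (C (clk k l) * (esymAug n (l + 1) * RSkn n (k - 1 - l)))
        = (∑ S ∈ (Finset.univ : Finset (Fin n)).powersetCard (l + 1),
            clk k l * (if ind S ≤ d then coeff (d - ind S) (RSkn n (k - 1 - l)) else 0))
          + ∑ S ∈ (Finset.univ : Finset (Fin n)).powersetCard l,
              clk k l * (if ind S ≤ d then coeff (d - ind S) (RSkn n (k - 1 - l)) else 0) := by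
    intro l _
    rw [coeff_C_mul, coeff_esymAug_mul, mul_add, Finset.mul_sum, Finset.mul_sum]
  rw [Finset.sum_congr rfl hL, Finset.sum_add_distrib]
  have h1 : (∑ l ∈ Finset.range (n + 1), ∑ S ∈ (Finset.univ : Finset (Fin n)).powersetCard (l + 1),
        clk k l * (if ind S ≤ d then coeff (d - ind S) (RSkn n (k - 1 - l)) else 0))
      = ∑ S ∈ (Finset.univ : Finset (Fin n)).powerset,
          (if S = ∅ then 0 else clk k (S.card - 1) *
            (if ind S ≤ d then coeff (d - ind S) (RSkn n (k - S.card)) else 0)) := by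
    rw [← reshape1 n (fun S => clk k (S.card - 1) *
      (if ind S ≤ d then coeff (d - ind S) (RSkn n (k - S.card)) else 0))]
    apply Finset.sum_congr rfl
    intro l _
    apply Finset.sum_congr rfl
    intro S hS
    have hc : S.card = l + 1 := (Finset.mem_powersetCard.1 hS).2
    rw [hc, Nat.add_sub_cancel, show k - (l + 1) = k - 1 - l by omega]
  have h2 : (∑ l ∈ Finset.range (n + 1), ∑ S ∈ (Finset.univ : Finset (Fin n)).powersetCard l,
        clk k l * (if ind S ≤ d then coeff (d - ind S) (RSkn n (k - 1 - l)) else 0))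
      = ∑ S ∈ (Finset.univ : Finset (Fin n)).powerset,
          clk k S.card * (if ind S ≤ d then coeff (d - ind S) (RSkn n (k - 1 - S.card)) else 0) :=
    reshape2 n (fun l S => clk k l * (if ind S ≤ d then coeff (d - ind S) (RSkn n (k - 1 - l)) else 0))
  rw [h1, h2, coeff_RSkn, ← hsdef]
  by_cases hs : s ≤ k
  · rw [if_pos hs]
    have hA : (∑ S ∈ (Finset.univ : Finset (Fin n)).powerset,
          (if S = ∅ then 0 else clk k (S.card - 1) *
            (if ind S ≤ d then coeff (d - ind S) (RSkn n (k - S.card)) else 0)))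
        = (1 - q ^ s) * (qqPoch q (k - 1) / (qqPoch q (k - s) * P)) := by
      have hterm : ∀ S ∈ (Finset.univ : Finset (Fin n)).powerset,
          (if S = ∅ then 0 else clk k (S.card - 1) *
            (if ind S ≤ d then coeff (d - ind S) (RSkn n (k - S.card)) else 0))
            = (if S = ∅ then 0 else (-1 : K) ^ (S.card - 1) * ∏ j ∈ S, (1 - q ^ d j))
              * (qqPoch q (k - 1) / (qqPoch q (k - s) * P)) := by
        intro S _
        by_cases hSe : S = ∅
        · rw [if_pos hSe, if_pos hSe, zero_mul]
        · rw [if_neg hSe, if_neg hSe, A_term n k hk d hs S hSe]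
      rw [Finset.sum_congr rfl hterm, ← Finset.sum_mul, alt_sum_ne]
    rcases Nat.lt_or_ge s k with hlt | hge
    · -- s < k
      have hsk1 : s ≤ k - 1 := by omega
      have hB : (∑ S ∈ (Finset.univ : Finset (Fin n)).powerset,
            clk k S.card * (if ind S ≤ d then coeff (d - ind S) (RSkn n (k - 1 - S.card)) else 0))
          = q ^ s * (qqPoch q (k - 1) / (qqPoch q (k - 1 - s) * P)) := by
        have hterm : ∀ S ∈ (Finset.univ : Finset (Fin n)).powerset,
            clk k S.card * (if ind S ≤ d then coeff (d - ind S) (RSkn n (k - 1 - S.card)) else 0)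
              = ((-1 : K) ^ S.card * ∏ j ∈ S, (1 - q ^ d j))
                * (qqPoch q (k - 1) / (qqPoch q (k - 1 - s) * P)) := by
          intro S _
          rw [B_term n k hk d hsk1 S]
        rw [Finset.sum_congr rfl hterm, ← Finset.sum_mul, alt_sum]
      rw [hA, hB, qMult_cons, show k - s + s = k by omega]
      have e1 : qqPoch q (k - s) = qqPoch q (k - 1 - s) * (1 - q ^ (k - s)) := by
        conv_lhs => rw [show k - s = (k - 1 - s) + 1 by omega]
        rw [qqPoch_succ, show k - 1 - s + 1 = k - s by omega]
      have e2 : qqPoch q k = qqPoch q (k - 1) * (1 - q ^ k) := by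
        conv_lhs => rw [show k = (k - 1) + 1 by omega]
        rw [qqPoch_succ, show k - 1 + 1 = k by omega]
      have e3 : (q : K) ^ s * q ^ (k - s) = q ^ k := by
        rw [← pow_add]
        congr 1
        omega
      have hB2 : qqPoch q (k - 1 - s) ≠ 0 := qqPoch_ne_zero _
      have hy : (1 : K) - q ^ (k - s) ≠ 0 := one_sub_q_pow_ne_zero (by omega)
      rw [e2, ← e3, e1]
      rw [← hPdef]
      field_simp
      ring
    · -- s = k
      have hsk : s = k := by omega
      have hB0 : (∑ S ∈ (Finset.univ : Finset (Fin n)).powerset,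
            clk k S.card * (if ind S ≤ d then coeff (d - ind S) (RSkn n (k - 1 - S.card)) else 0))
          = 0 := by
        apply Finset.sum_eq_zero
        intro S _
        exact B_term0 n k hk d (by omega) S
      rw [hA, hB0, add_zero, qMult_cons, show k - s + s = k by omega]
      have e2 : qqPoch q k = qqPoch q (k - 1) * (1 - q ^ k) := by
        conv_lhs => rw [show k = (k - 1) + 1 by omega]
        rw [qqPoch_succ, show k - 1 + 1 = k by omega]
      rw [e2, hsk]
      have hB1 : qqPoch q (k - k) ≠ 0 := qqPoch_ne_zero _
      rw [← hPdef]
      field_simp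
  · rw [if_neg hs]
    have hz1 : (∑ S ∈ (Finset.univ : Finset (Fin n)).powerset,
          (if S = ∅ then 0 else clk k (S.card - 1) *
            (if ind S ≤ d then coeff (d - ind S) (RSkn n (k - S.card)) else 0))) = 0 := by
      apply Finset.sum_eq_zero
      intro S _
      by_cases hSe : S = ∅
      · rw [if_pos hSe]
      · rw [if_neg hSe, A_term_zero n k hk d (by omega) S hSe]
    have hz2 : (∑ S ∈ (Finset.univ : Finset (Fin n)).powerset,
          clk k S.card * (if ind S ≤ d then coeff (d - ind S) (RSkn n (k - 1 - S.card)) else 0)) = 0 :=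
      Finset.sum_eq_zero fun S _ => B_term_zero n k hk d (by omega) S
    rw [hz1, hz2, add_zero]

end


/-- For `n ≥ 1`, `k ≥ 1` and `1 ≤ i ≤ n`, one has
`R_i(RS_{k−1,n}) = RS_{k,n}` in `ℚ(q)[x₁,…,xₙ]`. -/
theorem stmt11 (n k : ℕ) (hn : 1 ≤ n) (hk : 1 ≤ k) (i : Fin n) :
    Rop i (RSkn n (k - 1)) = RSkn n k := stmt11' n k hn hk i
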